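/- Let Δ = {0 ≤ u₁ ≤ ⋯ ≤ u_k ≤ 1} ⊂ ℝ^k be the standard ordered simplex, let 0 < v < 1, and let g₁, ..., g_k be integrable functions on [0,1]. Then ∫_Δ g₁(u₁)⋯g_k(u_k) du = ∑_{j=0}^{k} ( ∫_{Δ_j'} g₁(u₁)⋯g_j(u_j) du ) · ( ∫_{Δ_j''} g_{j+1}(u_{j+1})⋯g_k(u_k) du ), where Δ_j' = {0 ≤ u₁ ≤ ⋯ ≤ u_j ≤ v} and Δ_j'' = {v ≤ u_{j+1} ≤ ⋯ ≤ u_k ≤ 1}. -/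

import Mathlib

open MeasureTheory

def orderedSimplex (a b : ℝ) (k : ℕ) : Set (Fin k → ℝ) :=
  {u | Monotone u ∧ ∀ i, a ≤ u i ∧ u i ≤ b}

namespace SimplexSplit

def idx (j n k : ℕ) (h : j + n = k) : Fin j ⊕ Fin n ≃ Fin k :=
  finSumFinEquiv.trans (finCongr h)

@[simp] lemma idx_inl_val {j n k : ℕ} (h : j + n = k) (i : Fin j) :
    ((idx j n k h (Sum.inl i)) : ℕ) = i := by simp [idx]

@[simp] lemma idx_inr_val {j n k : ℕ} (h : j + n = k) (i : Fin n) :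
    ((idx j n k h (Sum.inr i)) : ℕ) = j + i := by simp [idx]

def splitE (j n k : ℕ) (h : j + n = k) : ((Fin j → ℝ) × (Fin n → ℝ)) ≃ᵐ (Fin k → ℝ) :=
  (MeasurableEquiv.sumPiEquivProdPi fun _ : Fin j ⊕ Fin n => ℝ).symm.trans
    (MeasurableEquiv.piCongrLeft (fun _ => ℝ) (idx j n k h))

lemma splitE_mp (j n k : ℕ) (h : j + n = k) :
    MeasurePreserving (splitE j n k h) volume volume :=
  (volume_measurePreserving_piCongrLeft (fun _ : Fin k => ℝ) (idx j n k h)).comp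
    (volume_measurePreserving_sumPiEquivProdPi_symm (fun _ : Fin j ⊕ Fin n => ℝ))

@[simp] lemma splitE_apply_inl {j n k : ℕ} (h : j + n = k) (x : Fin j → ℝ) (y : Fin n → ℝ)
    (i : Fin j) : splitE j n k h (x, y) (idx j n k h (Sum.inl i)) = x i := by
  simp [splitE, MeasurableEquiv.trans, MeasurableEquiv.piCongrLeft,
    MeasurableEquiv.sumPiEquivProdPi,
    Equiv.piCongrLeft_sumInl (fun _ : Fin k => ℝ) (idx j n k h) x y i]

@[simp] lemma splitE_apply_inr {j n k : ℕ} (h : j + n = k) (x : Fin j → ℝ) (y : Fin n → ℝ)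
    (i : Fin n) : splitE j n k h (x, y) (idx j n k h (Sum.inr i)) = y i := by
  simp [splitE, MeasurableEquiv.trans, MeasurableEquiv.piCongrLeft,
    MeasurableEquiv.sumPiEquivProdPi,
    Equiv.piCongrLeft_sumInr (fun _ : Fin k => ℝ) (idx j n k h) x y i]

lemma mem_image_iff {j n k : ℕ} (h : j + n = k) (A : Set (Fin j → ℝ)) (B : Set (Fin n → ℝ))
    (u : Fin k → ℝ) :
    u ∈ splitE j n k h '' (A ×ˢ B) ↔
      (fun i => u (idx j n k h (Sum.inl i))) ∈ A ∧
      (fun i => u (idx j n k h (Sum.inr i))) ∈ B := by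
  constructor
  · rintro ⟨⟨x, y⟩, ⟨hx, hy⟩, rfl⟩
    constructor
    · convert hx using 1; funext i; simp
    · convert hy using 1; funext i; simp
  · rintro ⟨hx, hy⟩
    refine ⟨(_, _), ⟨hx, hy⟩, ?_⟩
    funext i
    obtain ⟨s, rfl⟩ := (idx j n k h).surjective i
    cases s <;> simp

lemma integral_image_prod (j n k : ℕ) (h : j + n = k) (g : ℕ → ℝ → ℝ)
    (A : Set (Fin j → ℝ)) (B : Set (Fin n → ℝ)) :
    ∫ u in splitE j n k h '' (A ×ˢ B), ∏ i : Fin k, g i (u i)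
      = (∫ x in A, ∏ i : Fin j, g i (x i)) * (∫ y in B, ∏ i : Fin n, g (j + i) (y i)) := by
  rw [(splitE_mp j n k h).setIntegral_image_emb (MeasurableEquiv.measurableEmbedding _) _ _]
  have key : ∀ p : (Fin j → ℝ) × (Fin n → ℝ),
      (∏ i : Fin k, g i ((splitE j n k h) p i))
        = (∏ i : Fin j, g i (p.1 i)) * (∏ i : Fin n, g (j + i) (p.2 i)) := by
    rintro ⟨x, y⟩
    rw [← (idx j n k h).prod_comp fun i => g i ((splitE j n k h) (x, y) i),
      Fintype.prod_sum_type]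
    congr 1
    · exact Finset.prod_congr rfl fun i _ => by rw [splitE_apply_inl, idx_inl_val]
    · exact Finset.prod_congr rfl fun i _ => by rw [splitE_apply_inr, idx_inr_val]
  simp_rw [key]
  rw [Measure.volume_eq_prod]
  exact setIntegral_prod_mul (fun x : Fin j → ℝ => ∏ i : Fin j, g i (x i))
    (fun y : Fin n → ℝ => ∏ i : Fin n, g (j + i) (y i)) A B

lemma slice_null {k : ℕ} (i : Fin k) (c : ℝ) : volume {u : Fin k → ℝ | u i = c} = 0 := by
  have he : {u : Fin k → ℝ | u i = c}
      = Set.univ.pi (fun l => if l = i then {c} else Set.univ) := by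
    ext u
    simp only [Set.mem_setOf_eq, Set.mem_pi, Set.mem_univ, forall_true_left]
    constructor
    · intro hc l
      by_cases hl : l = i
      · subst hl; simp [hc]
      · simp [hl]
    · intro hl
      have := hl i
      simpa using this
  rw [he, volume_pi_pi]
  refine Finset.prod_eq_zero (Finset.mem_univ i) ?_
  simp

lemma measurableSet_orderedSimplex (a b : ℝ) (k : ℕ) :
    MeasurableSet (orderedSimplex a b k) := by
  have he : orderedSimplex a b k
      = (⋂ (p : Fin k) (q : Fin k) (_ : p ≤ q), {u : Fin k → ℝ | u p ≤ u q})
        ∩ ⋂ i, ({u : Fin k → ℝ | a ≤ u i} ∩ {u | u i ≤ b}) := by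
    ext u
    simp only [orderedSimplex, Set.mem_setOf_eq, Set.mem_inter_iff, Set.mem_iInter, Monotone]
  rw [he]
  refine MeasurableSet.inter ?_ ?_
  · exact .iInter fun p => .iInter fun q => .iInter fun _ =>
      measurableSet_le (measurable_pi_apply _) (measurable_pi_apply _)
  · exact .iInter fun i => (measurableSet_le measurable_const (measurable_pi_apply _)).inter
      (measurableSet_le (measurable_pi_apply _) measurable_const)

end SimplexSplit

theorem simplex_integral_split (k : ℕ) (v : ℝ) (hv : 0 < v) (hv1 : v < 1)
    (g : ℕ → ℝ → ℝ) (hg : ∀ i < k, IntegrableOn (g i) (Set.Icc (0:ℝ) 1)) :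
    ∫ u in orderedSimplex 0 1 k, ∏ i : Fin k, g i (u i)
      = ∑ j ∈ Finset.range (k + 1),
          (∫ u in orderedSimplex 0 v j, ∏ i : Fin j, g i (u i)) *
          (∫ u in orderedSimplex v 1 (k - j), ∏ i : Fin (k - j), g (j + i) (u i)) := by
  classical
  set F : (Fin k → ℝ) → ℝ := fun u => ∏ i : Fin k, g i (u i) with hF
  let S : ℕ → Set (Fin k → ℝ) := fun j =>
    {u | u ∈ orderedSimplex 0 1 k ∧
      ∀ i : Fin k, ((i : ℕ) < j → u i ≤ v) ∧ (j ≤ (i : ℕ) → v < u i)}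
  have hSmeas : ∀ j, MeasurableSet (S j) := by
    intro j
    have he : S j = orderedSimplex 0 1 k ∩
        ((⋂ (i : Fin k) (_ : (i : ℕ) < j), {u : Fin k → ℝ | u i ≤ v}) ∩
         (⋂ (i : Fin k) (_ : j ≤ (i : ℕ)), {u : Fin k → ℝ | v < u i})) := by
      ext u
      simp only [S, Set.mem_setOf_eq, Set.mem_inter_iff, Set.mem_iInter]
      exact ⟨fun ⟨h1, h2⟩ => ⟨h1, fun i hi => (h2 i).1 hi, fun i hi => (h2 i).2 hi⟩,
        fun ⟨h1, h2, h3⟩ => ⟨h1, fun i => ⟨h2 i, h3 i⟩⟩⟩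
    rw [he]
    exact (SimplexSplit.measurableSet_orderedSimplex 0 1 k).inter
      ((MeasurableSet.iInter fun i => .iInter fun _ =>
          measurableSet_le (measurable_pi_apply _) measurable_const).inter
       (MeasurableSet.iInter fun i => .iInter fun _ =>
          measurableSet_lt measurable_const (measurable_pi_apply _)))
  have hboxsub : orderedSimplex 0 1 k ⊆ Set.univ.pi fun _ : Fin k => Set.Icc (0:ℝ) 1 := by
    intro u hu
    simp only [Set.mem_pi, Set.mem_univ, forall_true_left]
    intro i
    exact ⟨(hu.2 i).1, (hu.2 i).2⟩
  have hbox : IntegrableOn F (Set.univ.pi fun _ : Fin k => Set.Icc (0:ℝ) 1) := by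
    have h1 : ∀ i : Fin k, Integrable ((Set.Icc (0:ℝ) 1).indicator (g i)) :=
      fun i => (integrable_indicator_iff measurableSet_Icc).2 (hg i i.isLt)
    have h2 : Integrable fun u : Fin k → ℝ =>
        ∏ i : Fin k, (Set.Icc (0:ℝ) 1).indicator (g i) (u i) :=
      Integrable.fin_nat_prod h1
    refine (h2.integrableOn).congr_fun ?_ (MeasurableSet.univ_pi fun _ => measurableSet_Icc)
    intro u hu
    simp only [Set.mem_pi, Set.mem_univ, forall_true_left] at hu
    simp only [hF]
    exact Finset.prod_congr rfl fun i _ => Set.indicator_of_mem (hu i) (g i)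
  have hSsub : ∀ j, S j ⊆ orderedSimplex 0 1 k := fun j u hu => hu.1
  have hSint : ∀ j, IntegrableOn F (S j) :=
    fun j => hbox.mono_set ((hSsub j).trans hboxsub)
  have hunion : orderedSimplex 0 1 k = ⋃ j ∈ Finset.range (k + 1), S j := by
    ext u
    simp only [Set.mem_iUnion, Finset.mem_range, exists_prop]
    constructor
    · intro hu
      set j := (Finset.univ.filter fun i : Fin k => u i ≤ v).card with hj
      have hjk : j ≤ k := by
        simpa using Finset.card_filter_le Finset.univ fun i : Fin k => u i ≤ v
      have hiff : ∀ i : Fin k, u i ≤ v ↔ (i : ℕ) < j := by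
        intro i
        constructor
        · intro hi
          by_contra hlt
          have hsub : Finset.Iic i ⊆ Finset.univ.filter fun i : Fin k => u i ≤ v := by
            intro i' hi'
            simp only [Finset.mem_Iic] at hi'
            simp only [Finset.mem_filter, Finset.mem_univ, true_and]
            exact le_trans (hu.1 hi') hi
          have hc := Finset.card_le_card hsub
          rw [Fin.card_Iic] at hc
          omega
        · intro hi
          by_contra hvi
          push_neg at hvi
          have hsub : (Finset.univ.filter fun i : Fin k => u i ≤ v) ⊆ Finset.Iio i := by
            intro i' hi'
            simp only [Finset.mem_filter, Finset.mem_univ, true_and] at hi'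
            simp only [Finset.mem_Iio]
            by_contra hge
            push_neg at hge
            exact absurd (le_trans (hu.1 hge) hi') (not_le.2 hvi)
          have hc := Finset.card_le_card hsub
          rw [Fin.card_Iio] at hc
          omega
      refine ⟨j, by omega, hu, fun i => ⟨fun h' => (hiff i).2 h', fun h' => ?_⟩⟩
      by_contra hle
      push_neg at hle
      have := (hiff i).1 hle
      omega
    · rintro ⟨j, _, hu, _⟩
      exact hu
  have hdisj : Set.Pairwise ↑(Finset.range (k + 1)) (Function.onFun Disjoint S) := by
    have key : ∀ a b : ℕ, a < b → b < k + 1 → Disjoint (S a) (S b) := by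
      intro a b hba hb
      rw [Set.disjoint_left]
      intro u hua hub
      have hak : a < k := by omega
      have h1 := (hua.2 ⟨a, hak⟩).2 (le_refl a)
      have h2 := (hub.2 ⟨a, hak⟩).1 hba
      exact absurd h2 (not_le.2 h1)
    intro a ha b hb hab
    simp only [Finset.coe_range, Set.mem_Iio] at ha hb
    rcases lt_or_gt_of_ne hab with hl | hl
    · exact key a b hl hb
    · exact (key b a hl ha).symm
  rw [hunion, integral_biUnion_finset (Finset.range (k + 1)) (fun j _ => hSmeas j) hdisj
    (fun j _ => hSint j)]
  refine Finset.sum_congr rfl fun j hj => ?_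
  rw [Finset.mem_range] at hj
  have hjk : j ≤ k := by omega
  have h : j + (k - j) = k := Nat.add_sub_cancel' hjk
  set T := SimplexSplit.splitE j (k - j) k h ''
    (orderedSimplex 0 v j ×ˢ orderedSimplex v 1 (k - j)) with hT
  have hST : S j ⊆ T := by
    intro u hu
    rw [hT, SimplexSplit.mem_image_iff]
    constructor
    · constructor
      · intro p q hpq
        apply hu.1.1
        rw [Fin.le_def]
        simp only [SimplexSplit.idx_inl_val]
        exact Fin.le_def.mp hpq
      · intro p
        refine ⟨(hu.1.2 _).1, (hu.2 _).1 ?_⟩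
        simp only [SimplexSplit.idx_inl_val]
        exact p.isLt
    · constructor
      · intro p q hpq
        apply hu.1.1
        rw [Fin.le_def]
        simp only [SimplexSplit.idx_inr_val]
        exact Nat.add_le_add_left (Fin.le_def.mp hpq) j
      · intro p
        refine ⟨le_of_lt ((hu.2 _).2 ?_), (hu.1.2 _).2⟩
        simp only [SimplexSplit.idx_inr_val]
        exact Nat.le_add_right j p
  have hTS : T \ S j ⊆ ⋃ i : Fin k, {u : Fin k → ℝ | u i = v} := by
    intro u hu
    rw [Set.mem_iUnion]
    by_contra hC
    push_neg at hC
    simp only [Set.mem_setOf_eq] at hC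
    apply hu.2
    obtain ⟨hx, hy⟩ := (SimplexSplit.mem_image_iff h _ _ u).1 hu.1
    have hXeq : ∀ (i : Fin k) (hi : (i : ℕ) < j),
        u i = u (SimplexSplit.idx j (k - j) k h (Sum.inl ⟨(i : ℕ), hi⟩)) := by
      intro i hi
      congr 1
    have hYeq : ∀ (i : Fin k) (hi : j ≤ (i : ℕ)),
        u i = u (SimplexSplit.idx j (k - j) k h (Sum.inr ⟨(i : ℕ) - j, by omega⟩)) := by
      intro i hi
      congr 1
      refine (Fin.ext ?_).symm
      simp only [SimplexSplit.idx_inr_val]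
      omega
    have hlow : ∀ (i : Fin k), (i : ℕ) < j → 0 ≤ u i ∧ u i ≤ v := by
      intro i hi
      rw [hXeq i hi]
      exact hx.2 _
    have hhigh : ∀ (i : Fin k), j ≤ (i : ℕ) → v ≤ u i ∧ u i ≤ 1 := by
      intro i hi
      rw [hYeq i hi]
      exact hy.2 _
    have hmono : Monotone u := by
      intro p q hpq
      rcases lt_or_ge (p : ℕ) j with hp | hp
      · rcases lt_or_ge (q : ℕ) j with hq | hq
        · rw [hXeq p hp, hXeq q hq]
          exact hx.1 (Fin.mk_le_mk.mpr (Fin.le_def.mp hpq))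
        · exact (hlow p hp).2.trans (hhigh q hq).1
      · have hpq' : (p : ℕ) ≤ q := Fin.le_def.mp hpq
        have hq : j ≤ (q : ℕ) := le_trans hp hpq'
        rw [hYeq p hp, hYeq q hq]
        exact hy.1 (Fin.mk_le_mk.mpr (by omega))
    refine ⟨⟨hmono, fun i => ?_⟩, fun i => ⟨fun hi => (hlow i hi).2, fun hi =>
      lt_of_le_of_ne (hhigh i hi).1 (Ne.symm (hC i))⟩⟩
    rcases lt_or_ge (i : ℕ) j with hi | hi
    · exact ⟨(hlow i hi).1, (hlow i hi).2.trans hv1.le⟩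
    · exact ⟨hv.le.trans (hhigh i hi).1, (hhigh i hi).2⟩
  have hae : S j =ᵐ[volume] T := by
    rw [ae_eq_set]
    constructor
    · rw [Set.diff_eq_empty.mpr hST]
      exact measure_empty
    · exact measure_mono_null hTS
        (measure_iUnion_null fun i => SimplexSplit.slice_null i v)
  rw [setIntegral_congr_set hae, hT, SimplexSplit.integral_image_prod]
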